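/- Let m^1, m^2 be probability measures on C_T with ∫ sup_{t≤T}(|c_t|^4 + ‖w_t‖^4) dm^i < ∞ for i = 1,2, and let (c^1, w^1) and (c^2, w^2) be solutions of the frozen system with inputs m^1 and m^2 respectively, driven by the same initial condition (c_0, w_0) distributed as μ̄_0. Then there exists a constant C < ∞ such that for all t ∈ [0,T], almost surely: |c_t^2 − c_t^1| ≤ C ∫_0^t [ ‖w_s^2 − w_s^1‖ + D_{s,4}(m^1, m^2) ] ds. -/

import Mathlib

open MeasureTheory ProbabilityTheory Filter
open scoped ENNReal RealInnerProductSpace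

noncomputable section

/-- Euclidean space `ℝ^d`. -/
abbrev Euc (d : ℕ) := EuclideanSpace ℝ (Fin d)

/-- The path space `C_T = C([0,T]; ℝ × ℝ^d)`. -/
abbrev PathSpace (d : ℕ) (T : ℝ) := C(Set.Icc (0:ℝ) T, ℝ × Euc d)

/-- Borel measurable structure on the path space. -/
instance (d : ℕ) (T : ℝ) : MeasurableSpace (PathSpace d T) := borel _

/-- Evaluation of a path at time `s ∈ ℝ` (clamped to `[0,T]`). -/
def evalPath {d : ℕ} {T : ℝ} (hT : 0 ≤ T) (γ : PathSpace d T) (s : ℝ) : ℝ × Euc d :=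
  γ (Set.projIcc 0 T hT s)

/-- `⟨G_{s,x}, m⟩ = ∫ c'_s σ(w'_s · x) m(d(c',w'))`. -/
def Gpair {d : ℕ} {T : ℝ} (hT : 0 ≤ T) (σ : ℝ → ℝ) (m : Measure (PathSpace d T))
    (s : ℝ) (x : Euc d) : ℝ :=
  ∫ γ, (evalPath hT γ s).1 * σ (⟪(evalPath hT γ s).2, x⟫) ∂m

/-- The `p`-th power of the `ℓ^p` norm on `ℝ^{1+d}`. -/
def lpPow {d : ℕ} (p : ℝ) (z : ℝ × Euc d) : ℝ := |z.1| ^ p + ∑ j, |z.2 j| ^ p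

/-- The Wasserstein-type metric `D_{t,p}` on probability measures on path space. -/
def Dpath {d : ℕ} {T : ℝ} (hT : 0 ≤ T) (t p : ℝ)
    (m m' : Measure (PathSpace d T)) : ℝ :=
  sInf { r | ∃ ν : Measure (PathSpace d T × PathSpace d T), IsProbabilityMeasure ν ∧
    ν.map Prod.fst = m ∧ ν.map Prod.snd = m' ∧
    r = (∫ γ, min (⨆ s : Set.Icc (0:ℝ) t,
          lpPow p (evalPath hT γ.1 s - evalPath hT γ.2 s)) 1 ∂ν) ^ (1 / p) }

/-- A random continuous path `ξ` solves the frozen system with input measure `m`. -/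
def IsFrozenSolution {d : ℕ} {T : ℝ} (hT : 0 ≤ T) (α : ℝ) (σ : ℝ → ℝ)
    (π : Measure (Euc d × ℝ)) (μ0 : Measure (ℝ × Euc d))
    {Ω : Type} [MeasureSpace Ω]
    (m : Measure (PathSpace d T)) (ξ : Ω → PathSpace d T) : Prop :=
  Measurable ξ ∧
  Measure.map (fun ω => evalPath hT (ξ ω) 0) ℙ = μ0 ∧
  ∀ ω, ∀ t ∈ Set.Icc (0:ℝ) T,
    ((evalPath hT (ξ ω) t).1 = (evalPath hT (ξ ω) 0).1
      + (∫ s in (0:ℝ)..t, ∫ pt, α * (pt.2 - Gpair hT σ m s pt.1)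
          * σ (⟪(evalPath hT (ξ ω) s).2, pt.1⟫) ∂π)) ∧
    ((evalPath hT (ξ ω) t).2 = (evalPath hT (ξ ω) 0).2
      + ∫ s in (0:ℝ)..t, ∫ pt, (α * (pt.2 - Gpair hT σ m s pt.1)
          * (evalPath hT (ξ ω) s).1 * deriv σ (⟪(evalPath hT (ξ ω) s).2, pt.1⟫)) • pt.1 ∂π)

end
namespace Frozen18

open Set

noncomputable section

instance (d : ℕ) (T : ℝ) : BorelSpace (PathSpace d T) := ⟨rfl⟩

variable {d : ℕ} {T : ℝ}

lemma continuous_evalPath_path (hT : 0 ≤ T) (s : ℝ) :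
    Continuous fun γ : PathSpace d T => evalPath hT γ s := by
  unfold evalPath
  exact continuous_eval_const _

lemma continuous_evalPath_time (hT : 0 ≤ T) (γ : PathSpace d T) :
    Continuous fun s : ℝ => evalPath hT γ s :=
  γ.continuous.comp continuous_projIcc

lemma continuous_evalPath_pair (hT : 0 ≤ T) :
    Continuous fun p : PathSpace d T × ℝ => evalPath hT p.1 p.2 := by
  have h : Continuous fun q : PathSpace d T × (Set.Icc (0:ℝ) T) => q.1 q.2 :=
    continuous_eval
  have h2 : Continuous fun p : PathSpace d T × ℝ =>
      (p.1, Set.projIcc (0:ℝ) T hT p.2) :=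
    continuous_fst.prodMk (continuous_projIcc.comp continuous_snd)
  exact h.comp h2

lemma evalPath_coe (hT : 0 ≤ T) (γ : PathSpace d T) (u : Set.Icc (0:ℝ) T) :
    evalPath hT γ (u : ℝ) = γ u := by
  simp [evalPath, Set.projIcc_val]

lemma evalPath_proj (hT : 0 ≤ T) (γ : PathSpace d T) (s : ℝ) :
    evalPath hT γ s = evalPath hT γ ((Set.projIcc 0 T hT s : Set.Icc (0:ℝ) T) : ℝ) := by
  simp [evalPath, Set.projIcc_val]

/-- `⨆` of a jointly continuous nonneg family over a compact space is continuous. -/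
lemma continuous_iSup_comp {X K : Type*} [TopologicalSpace X] [TopologicalSpace K]
    [CompactSpace K] {F : X × K → ℝ} (hF : Continuous F) (h0 : ∀ p, 0 ≤ F p) :
    Continuous fun x => ⨆ u : K, F (x, u) := by
  have hcur := (ContinuousMap.curry ⟨F, hF⟩).continuous
  have heq : (fun x => ⨆ u : K, F (x, u))
      = fun x => ‖(ContinuousMap.curry ⟨F, hF⟩) x‖ := by
    funext x
    rw [ContinuousMap.norm_eq_iSup_norm]
    exact iSup_congr fun u => (Real.norm_of_nonneg (h0 _)).symm
  rw [heq]
  exact hcur.norm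

lemma le_iSup_of_continuous {K : Type*} [TopologicalSpace K] [CompactSpace K]
    {f : K → ℝ} (hf : Continuous f) (u : K) : f u ≤ ⨆ v, f v :=
  le_ciSup (isCompact_range hf).bddAbove u

lemma quarter_le {a b : ℝ} (ha : 0 ≤ a) (h : a ^ (4:ℕ) ≤ b) : a ≤ b ^ ((1:ℝ)/4) := by
  have hb : 0 ≤ b := le_trans (pow_nonneg ha 4) h
  have key : ((a ^ (4:ℕ) : ℝ)) ^ ((1:ℝ)/4) = a := by
    rw [← Real.rpow_natCast a 4, ← Real.rpow_mul ha]
    norm_num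
  calc a = ((a ^ (4:ℕ) : ℝ)) ^ ((1:ℝ)/4) := key.symm
    _ ≤ b ^ ((1:ℝ)/4) := Real.rpow_le_rpow (pow_nonneg ha 4) h (by norm_num)

lemma abs_le_one_add_pow_four (a : ℝ) : |a| ≤ 1 + |a| ^ (4:ℕ) := by
  rcases le_total (|a|) 1 with h | h
  · nlinarith [pow_nonneg (abs_nonneg a) 4]
  · have := le_self_pow₀ h (n := 4) (by norm_num)
    nlinarith

lemma sq_bound (a : ℝ) (ha : 0 ≤ a) : (1 + a) ^ (2:ℕ) ≤ 2 + 2 * a ^ (2:ℕ) := by nlinarith [sq_nonneg (1 - a)]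

lemma abs_sub_pow_four (a b : ℝ) : |a - b| ^ (4:ℕ) ≤ 8 * (|a| ^ (4:ℕ) + |b| ^ (4:ℕ)) := by
  have h1 : |a - b| ≤ |a| + |b| := abs_sub a b
  have h2 : |a - b| ^ (4:ℕ) ≤ (|a| + |b|) ^ (4:ℕ) :=
    pow_le_pow_left₀ (abs_nonneg _) h1 4
  nlinarith [abs_nonneg a, abs_nonneg b, sq_nonneg (|a| - |b|), sq_nonneg (|a|^2 - |b|^2),
    sq_nonneg (|a| + |b|), sq_nonneg (|a| * |b|), mul_nonneg (abs_nonneg a) (abs_nonneg b)]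

end

end Frozen18
namespace Frozen18

open Set

noncomputable section

variable {d : ℕ} {T : ℝ}

/-- `N z = |c|⁴ + ‖w‖⁴`. -/
def NN {d : ℕ} (z : ℝ × Euc d) : ℝ := |z.1| ^ (4:ℕ) + ‖z.2‖ ^ (4:ℕ)

lemma NN_nonneg (z : ℝ × Euc d) : 0 ≤ NN z :=
  add_nonneg (pow_nonneg (abs_nonneg _) 4) (pow_nonneg (norm_nonneg _) 4)

lemma NN_continuous : Continuous (NN : ℝ × Euc d → ℝ) :=
  ((continuous_abs.comp continuous_fst).pow 4).add ((continuous_norm.comp continuous_snd).pow 4)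

/-- supremum of `NN` along a path. -/
def supN (hT : 0 ≤ T) (γ : PathSpace d T) : ℝ :=
  ⨆ t : Set.Icc (0:ℝ) T, NN (evalPath hT γ (t : ℝ))

lemma supN_continuous (hT : 0 ≤ T) : Continuous (supN (d := d) hT) := by
  apply continuous_iSup_comp
    (F := fun p : PathSpace d T × (Set.Icc (0:ℝ) T) => NN (evalPath hT p.1 (p.2 : ℝ)))
  · exact NN_continuous.comp ((continuous_evalPath_pair hT).comp
      (continuous_fst.prodMk (continuous_subtype_val.comp continuous_snd)))
  · exact fun p => NN_nonneg _

lemma supN_nonneg (hT : 0 ≤ T) (γ : PathSpace d T) : 0 ≤ supN hT γ :=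
  Real.iSup_nonneg fun _ => NN_nonneg _

lemma NN_evalPath_le_supN (hT : 0 ≤ T) (γ : PathSpace d T) (s : ℝ) :
    NN (evalPath hT γ s) ≤ supN hT γ := by
  rw [evalPath_proj hT γ s]
  exact le_iSup_of_continuous
    (f := fun u : Set.Icc (0:ℝ) T => NN (evalPath hT γ (u : ℝ)))
    (NN_continuous.comp ((continuous_evalPath_time hT γ).comp continuous_subtype_val))
    (Set.projIcc 0 T hT s)

lemma abs_c_le (hT : 0 ≤ T) (γ : PathSpace d T) (s : ℝ) :
    |(evalPath hT γ s).1| ≤ 1 + supN hT γ := by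
  refine (abs_le_one_add_pow_four _).trans ?_
  have h := NN_evalPath_le_supN hT γ s
  have h2 : |(evalPath hT γ s).1| ^ (4:ℕ) ≤ NN (evalPath hT γ s) :=
    le_add_of_nonneg_right (pow_nonneg (norm_nonneg _) 4)
  linarith

lemma c_pow_le_supN (hT : 0 ≤ T) (γ : PathSpace d T) (s : ℝ) :
    |(evalPath hT γ s).1| ^ (4:ℕ) ≤ supN hT γ :=
  le_trans (le_add_of_nonneg_right (pow_nonneg (norm_nonneg _) 4)) (NN_evalPath_le_supN hT γ s)

/- `lpPow 4` facts -/

lemma lpPow_four_eq (z : ℝ × Euc d) :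
    lpPow 4 z = |z.1| ^ (4:ℕ) + ∑ j, |z.2 j| ^ (4:ℕ) := by
  have h4 : (4:ℝ) = ((4:ℕ):ℝ) := by norm_num
  simp only [lpPow, h4, Real.rpow_natCast]

lemma lpPow_four_nonneg (z : ℝ × Euc d) : 0 ≤ lpPow 4 z := by
  rw [lpPow_four_eq]
  exact add_nonneg (pow_nonneg (abs_nonneg _) 4)
    (Finset.sum_nonneg fun j _ => pow_nonneg (abs_nonneg _) 4)

lemma lpPow_four_continuous : Continuous (lpPow 4 : ℝ × Euc d → ℝ) := by
  have : (lpPow 4 : ℝ × Euc d → ℝ)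
      = fun z => |z.1| ^ (4:ℕ) + ∑ j, |z.2 j| ^ (4:ℕ) := funext lpPow_four_eq
  rw [this]
  refine ((continuous_abs.comp continuous_fst).pow 4).add (continuous_finset_sum _ fun j _ => ?_)
  exact ((continuous_abs.comp ((EuclideanSpace.proj j).continuous.comp continuous_snd)).pow 4)

lemma norm_euc_pow_four (w : Euc d) : ‖w‖ ^ (4:ℕ) = (∑ j, w j ^ (2:ℕ)) ^ (2:ℕ) := by
  have h : ‖w‖ = Real.sqrt (∑ j, w j ^ (2:ℕ)) := by
    rw [EuclideanSpace.norm_eq]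
    congr 1
    exact Finset.sum_congr rfl fun j _ => by rw [Real.norm_eq_abs, sq_abs]
  have hnn : 0 ≤ ∑ j, w j ^ (2:ℕ) := Finset.sum_nonneg fun j _ => sq_nonneg _
  rw [h, show (4:ℕ) = 2 * 2 from rfl, pow_mul, Real.sq_sqrt hnn]

lemma sum_pow_four_le_norm (w : Euc d) : ∑ j, |w j| ^ (4:ℕ) ≤ ‖w‖ ^ (4:ℕ) := by
  rw [norm_euc_pow_four]
  have h1 : ∀ j : Fin d, |w j| ^ (4:ℕ) = (w j ^ (2:ℕ)) ^ (2:ℕ) := fun j => by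
    rw [pow_abs, abs_of_nonneg (by positivity : (0:ℝ) ≤ w j ^ (4:ℕ))]; ring
  simp only [h1]
  have h2 : ∀ j : Fin d, (w j ^ (2:ℕ)) ^ (2:ℕ) ≤ w j ^ (2:ℕ) * ∑ k, w k ^ (2:ℕ) := by
    intro j
    rw [pow_two]
    refine mul_le_mul_of_nonneg_left ?_ (sq_nonneg _)
    exact Finset.single_le_sum (fun k _ => sq_nonneg (w k)) (Finset.mem_univ j)
  calc ∑ j, (w j ^ (2:ℕ)) ^ (2:ℕ) ≤ ∑ j, w j ^ (2:ℕ) * ∑ k, w k ^ (2:ℕ) :=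
        Finset.sum_le_sum fun j _ => h2 j
    _ = (∑ j, w j ^ (2:ℕ)) ^ (2:ℕ) := by rw [← Finset.sum_mul, pow_two]

lemma norm_pow_four_le_card_sum (w : Euc d) :
    ‖w‖ ^ (4:ℕ) ≤ (d:ℝ) * ∑ j, |w j| ^ (4:ℕ) := by
  rw [norm_euc_pow_four]
  have := Finset.sum_mul_sq_le_sq_mul_sq Finset.univ (fun _ : Fin d => (1:ℝ))
    (fun j => w j ^ (2:ℕ))
  have h1 : ∀ j : Fin d, (w j ^ (2:ℕ)) ^ (2:ℕ) = |w j| ^ (4:ℕ) := fun j => by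
    rw [pow_abs, abs_of_nonneg (by positivity : (0:ℝ) ≤ w j ^ (4:ℕ))]; ring
  simpa [Finset.card_univ, h1] using this

lemma lpPow_sub_le (z z' : ℝ × Euc d) :
    lpPow 4 (z - z') ≤ 8 * (NN z + NN z') := by
  rw [lpPow_four_eq, NN, NN]
  have h1 : |(z - z').1| ^ (4:ℕ) ≤ 8 * (|z.1| ^ (4:ℕ) + |z'.1| ^ (4:ℕ)) := abs_sub_pow_four _ _
  have h2 : ∑ j, |(z - z').2 j| ^ (4:ℕ) ≤ 8 * (‖z.2‖ ^ (4:ℕ) + ‖z'.2‖ ^ (4:ℕ)) := by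
    have hj : ∀ j : Fin d, |(z - z').2 j| ^ (4:ℕ) ≤ 8 * (|z.2 j| ^ (4:ℕ) + |z'.2 j| ^ (4:ℕ)) := by
      intro j
      have : (z - z').2 j = z.2 j - z'.2 j := rfl
      rw [this]
      exact abs_sub_pow_four _ _
    calc ∑ j, |(z - z').2 j| ^ (4:ℕ)
        ≤ ∑ j, 8 * (|z.2 j| ^ (4:ℕ) + |z'.2 j| ^ (4:ℕ)) := Finset.sum_le_sum fun j _ => hj j
      _ = 8 * ((∑ j, |z.2 j| ^ (4:ℕ)) + ∑ j, |z'.2 j| ^ (4:ℕ)) := by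
          rw [← Finset.sum_add_distrib, Finset.mul_sum]
      _ ≤ 8 * (‖z.2‖ ^ (4:ℕ) + ‖z'.2‖ ^ (4:ℕ)) := by
          have := sum_pow_four_le_norm z.2
          have := sum_pow_four_le_norm z'.2
          linarith
  linarith

/-- Cauchy–Schwarz for integrals of nonneg functions. -/
lemma myCS {X : Type*} [MeasurableSpace X] {ν : Measure X} [IsProbabilityMeasure ν]
    {f g : X → ℝ} (hfm : AEStronglyMeasurable f ν) (hgm : AEStronglyMeasurable g ν)
    (hf0 : ∀ x, 0 ≤ f x) (hg0 : ∀ x, 0 ≤ g x)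
    (hf2 : Integrable (fun x => f x ^ (2:ℕ)) ν) (hg2 : Integrable (fun x => g x ^ (2:ℕ)) ν) :
    ∫ x, f x * g x ∂ν
      ≤ (∫ x, f x ^ (2:ℕ) ∂ν) ^ ((1:ℝ)/2) * (∫ x, g x ^ (2:ℕ) ∂ν) ^ ((1:ℝ)/2) := by
  have hpq : Real.HolderConjugate 2 2 := Real.HolderConjugate.two_two
  have hfL : MemLp f (ENNReal.ofReal 2) ν := by
    rw [show ENNReal.ofReal 2 = 2 by simp]
    exact (memLp_two_iff_integrable_sq hfm).mpr hf2
  have hgL : MemLp g (ENNReal.ofReal 2) ν := by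
    rw [show ENNReal.ofReal 2 = 2 by simp]
    exact (memLp_two_iff_integrable_sq hgm).mpr hg2
  have h := MeasureTheory.integral_mul_le_Lp_mul_Lq_of_nonneg hpq
    (Eventually.of_forall hf0) (Eventually.of_forall hg0) hfL hgL
  have h2 : ∀ a : ℝ, a ^ (2:ℝ) = a ^ (2:ℕ) := fun a => by
    rw [show (2:ℝ) = ((2:ℕ):ℝ) by norm_num, Real.rpow_natCast]
  simpa [h2] using h

end

end Frozen18
namespace Frozen18

open Set

noncomputable section

variable {d : ℕ} {T : ℝ}

lemma sigma_lip {σ : ℝ → ℝ} {Cσ : ℝ} (hσ : ContDiff ℝ 2 σ)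
    (hCσ : ∀ z : ℝ, |deriv σ z| ≤ Cσ) (a b : ℝ) : |σ a - σ b| ≤ Cσ * |a - b| := by
  have hdiff : ∀ x ∈ (Set.univ : Set ℝ), DifferentiableAt ℝ σ x := fun x _ =>
    (hσ.differentiable (by norm_num)).differentiableAt
  have hb : ∀ x ∈ (Set.univ : Set ℝ), ‖deriv σ x‖ ≤ Cσ := fun x _ => by
    simpa using hCσ x
  simpa using convex_univ.norm_image_sub_le_of_norm_deriv_le hdiff hb (Set.mem_univ b)
    (Set.mem_univ a)

lemma Cσ_nonneg {σ : ℝ → ℝ} {Cσ : ℝ} (hCσ : ∀ z : ℝ, |σ z| ≤ Cσ) : 0 ≤ Cσ :=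
  (abs_nonneg _).trans (hCσ 0)

lemma Gintegrand_continuous (hT : 0 ≤ T) {σ : ℝ → ℝ} (hσc : Continuous σ) (s : ℝ) (x : Euc d) :
    Continuous fun γ : PathSpace d T => (evalPath hT γ s).1 * σ (⟪(evalPath hT γ s).2, x⟫) := by
  have h1 := continuous_evalPath_path hT (d := d) s
  exact (continuous_fst.comp h1).mul
    (hσc.comp ((continuous_snd.comp h1).inner continuous_const))

lemma Gintegrand_bound (hT : 0 ≤ T) {σ : ℝ → ℝ} {Cσ : ℝ} (hCσ : ∀ z : ℝ, |σ z| ≤ Cσ)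
    (s : ℝ) (x : Euc d) (γ : PathSpace d T) :
    ‖(evalPath hT γ s).1 * σ (⟪(evalPath hT γ s).2, x⟫)‖ ≤ Cσ * (1 + supN hT γ) := by
  rw [Real.norm_eq_abs, abs_mul]
  have h1 := abs_c_le hT γ s
  have h2 := hCσ (⟪(evalPath hT γ s).2, x⟫)
  have h3 : (0:ℝ) ≤ 1 + supN hT γ := by
    have := supN_nonneg hT γ; linarith
  calc |(evalPath hT γ s).1| * |σ (⟪(evalPath hT γ s).2, x⟫)|
      ≤ (1 + supN hT γ) * Cσ :=
        mul_le_mul h1 h2 (abs_nonneg _) h3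
    _ = Cσ * (1 + supN hT γ) := mul_comm _ _

lemma G_bound_integrable (hT : 0 ≤ T) (Cσ : ℝ) (m : Measure (PathSpace d T))
    [IsProbabilityMeasure m] (hm : Integrable (supN hT) m) :
    Integrable (fun γ => Cσ * (1 + supN hT γ)) m :=
  ((integrable_const (1:ℝ)).add hm).const_mul Cσ

lemma Gpair_abs_le (hT : 0 ≤ T) {σ : ℝ → ℝ} {Cσ : ℝ} (hCσ : ∀ z : ℝ, |σ z| ≤ Cσ)
    (m : Measure (PathSpace d T)) [IsProbabilityMeasure m] (hm : Integrable (supN hT) m)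
    (s : ℝ) (x : Euc d) :
    |Gpair hT σ m s x| ≤ Cσ * (1 + ∫ γ, supN hT γ ∂m) := by
  rw [Gpair, ← Real.norm_eq_abs]
  have h := MeasureTheory.norm_integral_le_of_norm_le (G_bound_integrable hT Cσ m hm)
    (Eventually.of_forall fun γ => Gintegrand_bound hT hCσ s x γ)
  refine h.trans (le_of_eq ?_)
  rw [integral_const_mul, integral_add (integrable_const _) hm, integral_const]
  simp

lemma Gpair_continuous_s (hT : 0 ≤ T) {σ : ℝ → ℝ} {Cσ : ℝ} (hσc : Continuous σ)
    (hCσ : ∀ z : ℝ, |σ z| ≤ Cσ) (m : Measure (PathSpace d T)) [IsProbabilityMeasure m]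
    (hm : Integrable (supN hT) m) (x : Euc d) :
    Continuous fun s : ℝ => Gpair hT σ m s x := by
  apply MeasureTheory.continuous_of_dominated (bound := fun γ => Cσ * (1 + supN hT γ))
  · exact fun s => (Gintegrand_continuous hT hσc s x).aestronglyMeasurable
  · exact fun s => Eventually.of_forall fun γ => Gintegrand_bound hT hCσ s x γ
  · exact G_bound_integrable hT Cσ m hm
  · refine Eventually.of_forall fun γ => ?_
    have h1 := continuous_evalPath_time hT γ
    exact (continuous_fst.comp h1).mul
      (hσc.comp ((continuous_snd.comp h1).inner continuous_const))

lemma Gpair_continuous_x (hT : 0 ≤ T) {σ : ℝ → ℝ} {Cσ : ℝ} (hσc : Continuous σ)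
    (hCσ : ∀ z : ℝ, |σ z| ≤ Cσ) (m : Measure (PathSpace d T)) [IsProbabilityMeasure m]
    (hm : Integrable (supN hT) m) (s : ℝ) :
    Continuous fun x : Euc d => Gpair hT σ m s x := by
  apply MeasureTheory.continuous_of_dominated (bound := fun γ => Cσ * (1 + supN hT γ))
  · exact fun x => (Gintegrand_continuous hT hσc s x).aestronglyMeasurable
  · exact fun x => Eventually.of_forall fun γ => Gintegrand_bound hT hCσ s x γ
  · exact G_bound_integrable hT Cσ m hm
  · refine Eventually.of_forall fun γ => ?_
    exact continuous_const.mul (hσc.comp (continuous_const.inner continuous_id))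

end

end Frozen18
namespace Frozen18

open Set

set_option maxHeartbeats 1000000
set_option synthInstance.maxHeartbeats 400000

noncomputable section

variable {d : ℕ} {T : ℝ}

example : OpensMeasurableSpace (PathSpace d T × PathSpace d T) := inferInstance
example : SecondCountableTopology (PathSpace d T) := inferInstance

/-- The sup of the 4th-power ℓ⁴ distance of two paths up to time `s`. -/
def SFun (hT : 0 ≤ T) (s : ℝ) (γ : PathSpace d T × PathSpace d T) : ℝ :=
  ⨆ u : Set.Icc (0:ℝ) s, lpPow 4 (evalPath hT γ.1 (u:ℝ) - evalPath hT γ.2 (u:ℝ))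

lemma SFun_nonneg (hT : 0 ≤ T) (s : ℝ) (γ : PathSpace d T × PathSpace d T) :
    0 ≤ SFun hT s γ :=
  Real.iSup_nonneg fun _ => lpPow_four_nonneg _

lemma SFun_continuous (hT : 0 ≤ T) (s : ℝ) :
    Continuous (SFun (d := d) hT s) := by
  apply continuous_iSup_comp
    (F := fun p : (PathSpace d T × PathSpace d T) × (Set.Icc (0:ℝ) s) =>
      lpPow 4 (evalPath hT p.1.1 (p.2:ℝ) - evalPath hT p.1.2 (p.2:ℝ)))
  · refine lpPow_four_continuous.comp (Continuous.sub ?_ ?_)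
    · exact (continuous_evalPath_pair hT).comp
        ((continuous_fst.comp continuous_fst).prodMk
          (continuous_subtype_val.comp continuous_snd))
    · exact (continuous_evalPath_pair hT).comp
        ((continuous_snd.comp continuous_fst).prodMk
          (continuous_subtype_val.comp continuous_snd))
  · exact fun p => lpPow_four_nonneg _

lemma SFun_le (hT : 0 ≤ T) (s : ℝ) (γ : PathSpace d T × PathSpace d T) :
    SFun hT s γ ≤ 8 * (supN hT γ.1 + supN hT γ.2) := by
  refine Real.iSup_le (fun u => ?_) ?_
  · refine (lpPow_sub_le _ _).trans ?_
    have h1 := NN_evalPath_le_supN hT γ.1 (u:ℝ)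
    have h2 := NN_evalPath_le_supN hT γ.2 (u:ℝ)
    nlinarith
  · have := supN_nonneg hT γ.1
    have := supN_nonneg hT γ.2
    nlinarith

lemma lpPow_le_SFun (hT : 0 ≤ T) {s : ℝ} (hs : 0 ≤ s) (γ : PathSpace d T × PathSpace d T) :
    lpPow 4 (evalPath hT γ.1 s - evalPath hT γ.2 s) ≤ SFun hT s γ := by
  have hc : Continuous fun u : Set.Icc (0:ℝ) s =>
      lpPow 4 (evalPath hT γ.1 (u:ℝ) - evalPath hT γ.2 (u:ℝ)) := by
    refine lpPow_four_continuous.comp (Continuous.sub ?_ ?_)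
    · exact (continuous_evalPath_time hT γ.1).comp continuous_subtype_val
    · exact (continuous_evalPath_time hT γ.2).comp continuous_subtype_val
  exact le_iSup_of_continuous hc ⟨s, ⟨hs, le_rfl⟩⟩

lemma SFun_mono (hT : 0 ≤ T) {s s' : ℝ} (hss' : s ≤ s') (γ : PathSpace d T × PathSpace d T) :
    SFun hT s γ ≤ SFun hT s' γ := by
  refine Real.iSup_le (fun u => ?_) (SFun_nonneg hT s' γ)
  have hc : Continuous fun u : Set.Icc (0:ℝ) s' =>
      lpPow 4 (evalPath hT γ.1 (u:ℝ) - evalPath hT γ.2 (u:ℝ)) := by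
    refine lpPow_four_continuous.comp (Continuous.sub ?_ ?_)
    · exact (continuous_evalPath_time hT γ.1).comp continuous_subtype_val
    · exact (continuous_evalPath_time hT γ.2).comp continuous_subtype_val
  exact le_iSup_of_continuous hc ⟨(u:ℝ), u.2.1, u.2.2.trans hss'⟩

lemma minSFun_integrable (hT : 0 ≤ T) (s : ℝ)
    (ν : Measure (PathSpace d T × PathSpace d T)) [IsProbabilityMeasure ν] :
    Integrable (fun γ => min (SFun hT s γ) 1) ν := by
  refine Integrable.mono' (integrable_const (1:ℝ))
    (((SFun_continuous hT s).min continuous_const).aestronglyMeasurable)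
    (Eventually.of_forall fun γ => ?_)
  rw [Real.norm_eq_abs, abs_of_nonneg (le_min (SFun_nonneg hT s γ) zero_le_one)]
  exact min_le_right _ _

/-- The coupling set underlying `Dpath` for `p = 4`. -/
def DSet (hT : 0 ≤ T) (t : ℝ) (m m' : Measure (PathSpace d T)) : Set ℝ :=
  { r | ∃ ν : Measure (PathSpace d T × PathSpace d T), IsProbabilityMeasure ν ∧
    ν.map Prod.fst = m ∧ ν.map Prod.snd = m' ∧
    r = (∫ γ, min (SFun hT t γ) 1 ∂ν) ^ ((1:ℝ)/4) }

lemma Dpath_eq_sInf (hT : 0 ≤ T) (t : ℝ) (m m' : Measure (PathSpace d T)) :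
    Dpath hT t 4 m m' = sInf (DSet hT t m m') := rfl

lemma DSet_nonneg (hT : 0 ≤ T) (t : ℝ) (m m' : Measure (PathSpace d T)) :
    ∀ r ∈ DSet hT t m m', 0 ≤ r := by
  rintro r ⟨ν, hν, h1, h2, rfl⟩
  exact Real.rpow_nonneg (integral_nonneg fun γ =>
    le_min (SFun_nonneg hT t γ) zero_le_one) _

lemma DSet_nonempty (hT : 0 ≤ T) (t : ℝ) (m m' : Measure (PathSpace d T))
    [IsProbabilityMeasure m] [IsProbabilityMeasure m'] :
    (DSet hT t m m').Nonempty := by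
  refine ⟨_, m.prod m', inferInstance, ?_, ?_, rfl⟩
  · rw [MeasureTheory.Measure.map_fst_prod]; simp
  · rw [MeasureTheory.Measure.map_snd_prod]; simp

lemma Dpath_nonneg (hT : 0 ≤ T) (t : ℝ) (m m' : Measure (PathSpace d T))
    [IsProbabilityMeasure m] [IsProbabilityMeasure m'] :
    0 ≤ Dpath hT t 4 m m' := by
  rw [Dpath_eq_sInf]
  exact le_csInf (DSet_nonempty hT t m m') (DSet_nonneg hT t m m')

lemma Dpath_mono (hT : 0 ≤ T) {s s' : ℝ} (hss' : s ≤ s') (m m' : Measure (PathSpace d T))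
    [IsProbabilityMeasure m] [IsProbabilityMeasure m'] :
    Dpath hT s 4 m m' ≤ Dpath hT s' 4 m m' := by
  rw [Dpath_eq_sInf, Dpath_eq_sInf]
  refine le_csInf (DSet_nonempty hT s' m m') ?_
  rintro r ⟨ν, hν, h1, h2, rfl⟩
  have hmem : (∫ γ, min (SFun hT s γ) 1 ∂ν) ^ ((1:ℝ)/4) ∈ DSet hT s m m' :=
    ⟨ν, hν, h1, h2, rfl⟩
  refine (csInf_le ⟨0, DSet_nonneg hT s m m'⟩ hmem).trans ?_
  refine Real.rpow_le_rpow (integral_nonneg fun γ =>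
    le_min (SFun_nonneg hT s γ) zero_le_one) ?_ (by norm_num)
  exact integral_mono (minSFun_integrable hT s ν) (minSFun_integrable hT s' ν)
    (fun γ => min_le_min (SFun_mono hT hss' γ) le_rfl)

end

end Frozen18
namespace Frozen18

open Set

set_option maxHeartbeats 1000000
set_option synthInstance.maxHeartbeats 400000

noncomputable section

variable {d : ℕ} {T : ℝ}

lemma quad_bound {a : ℝ} (ha : 0 ≤ a) : (1+a)^(4:ℕ) ≤ 8*(1+a^(4:ℕ)) := by
  nlinarith [sq_nonneg (1-a), sq_nonneg (1-a^2), sq_nonneg a, sq_nonneg (a - a^2),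
    sq_nonneg (1+a), sq_nonneg (a+a^2), pow_nonneg ha 3, pow_nonneg ha 4]

lemma self_le_one_add_sq (a : ℝ) : a ≤ 1 + a^(2:ℕ) := by nlinarith [sq_nonneg (1-a)]

lemma rpow_quarter_pow {b : ℝ} (hb : 0 ≤ b) : (b ^ ((1:ℝ)/4)) ^ (4:ℕ) = b := by
  rw [← Real.rpow_natCast (b ^ ((1:ℝ)/4)) 4, ← Real.rpow_mul hb]
  norm_num

lemma rpow_half_sq {b : ℝ} (hb : 0 ≤ b) : (b ^ ((1:ℝ)/2)) ^ (2:ℕ) = b := by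
  rw [← Real.rpow_natCast (b ^ ((1:ℝ)/2)) 2, ← Real.rpow_mul hb]
  norm_num

lemma rpow_quarter_sq {b : ℝ} (hb : 0 ≤ b) : (b ^ ((1:ℝ)/4)) ^ (2:ℕ) = b ^ ((1:ℝ)/2) := by
  rw [← Real.rpow_natCast (b ^ ((1:ℝ)/4)) 2, ← Real.rpow_mul hb]
  norm_num

lemma rpow_half_half {b : ℝ} (hb : 0 ≤ b) :
    (b ^ ((1:ℝ)/2)) ^ ((1:ℝ)/2) = b ^ ((1:ℝ)/4) := by
  rw [← Real.rpow_mul hb]; norm_num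

lemma min_quarter_sq {b : ℝ} (hb : 0 ≤ b) :
    (min (b ^ ((1:ℝ)/4)) 1) ^ (2:ℕ) = (min b 1) ^ ((1:ℝ)/2) := by
  rcases le_total b 1 with h | h
  · rw [min_eq_left (Real.rpow_le_one hb h (by norm_num)), min_eq_left h,
      rpow_quarter_sq hb]
  · rw [min_eq_right (Real.one_le_rpow h (by norm_num)), min_eq_right h, one_pow,
      Real.one_rpow]

lemma integrable_comp_fst {f : PathSpace d T → ℝ} (hfc : Continuous f)
    {m : Measure (PathSpace d T)} {ν : Measure (PathSpace d T × PathSpace d T)}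
    (h1 : ν.map Prod.fst = m) (hfi : Integrable f m) :
    Integrable (fun γ : PathSpace d T × PathSpace d T => f γ.1) ν := by
  have h2 : Integrable f (ν.map Prod.fst) := h1.symm ▸ hfi
  have h3 := (integrable_map_measure hfc.aestronglyMeasurable
    measurable_fst.aemeasurable).mp h2
  simpa [Function.comp_def] using h3

lemma integrable_comp_snd {f : PathSpace d T → ℝ} (hfc : Continuous f)
    {m : Measure (PathSpace d T)} {ν : Measure (PathSpace d T × PathSpace d T)}
    (h2 : ν.map Prod.snd = m) (hfi : Integrable f m) :
    Integrable (fun γ : PathSpace d T × PathSpace d T => f γ.2) ν := by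
  have h2' : Integrable f (ν.map Prod.snd) := h2.symm ▸ hfi
  have h3 := (integrable_map_measure hfc.aestronglyMeasurable
    measurable_snd.aemeasurable).mp h2'
  simpa [Function.comp_def] using h3

lemma integral_comp_fst {f : PathSpace d T → ℝ} (hfc : Continuous f)
    {m : Measure (PathSpace d T)} {ν : Measure (PathSpace d T × PathSpace d T)}
    (h1 : ν.map Prod.fst = m) :
    ∫ γ, f γ.1 ∂ν = ∫ γ', f γ' ∂m := by
  rw [← h1, integral_map measurable_fst.aemeasurable hfc.aestronglyMeasurable]

lemma integral_comp_snd {f : PathSpace d T → ℝ} (hfc : Continuous f)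
    {m : Measure (PathSpace d T)} {ν : Measure (PathSpace d T × PathSpace d T)}
    (h2 : ν.map Prod.snd = m) :
    ∫ γ, f γ.2 ∂ν = ∫ γ', f γ' ∂m := by
  rw [← h2, integral_map measurable_snd.aemeasurable hfc.aestronglyMeasurable]

lemma coupling_bound (hT : 0 ≤ T) {σ : ℝ → ℝ} {Cσ : ℝ} (hσ : ContDiff ℝ 2 σ)
    (hCσ0 : ∀ z : ℝ, |σ z| ≤ Cσ) (hCσ1 : ∀ z : ℝ, |deriv σ z| ≤ Cσ)
    (m₁ m₂ : Measure (PathSpace d T)) [IsProbabilityMeasure m₁] [IsProbabilityMeasure m₂]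
    (hm₁ : Integrable (supN hT) m₁) (hm₂ : Integrable (supN hT) m₂)
    {s : ℝ} (hs0 : 0 ≤ s) (x : Euc d)
    (ν : Measure (PathSpace d T × PathSpace d T)) [IsProbabilityMeasure ν]
    (hν1 : ν.map Prod.fst = m₁) (hν2 : ν.map Prod.snd = m₂) :
    |Gpair hT σ m₁ s x - Gpair hT σ m₂ s x|
      ≤ (Cσ * (1 + (d:ℝ) ^ ((1:ℝ)/4)) * (1 + ‖x‖))
        * ((8 + 4 * (∫ γ, supN hT γ ∂m₂)
            + 32 * ((∫ γ, supN hT γ ∂m₁) + (∫ γ, supN hT γ ∂m₂))) ^ ((1:ℝ)/2))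
        * (∫ γ, min (SFun hT s γ) 1 ∂ν) ^ ((1:ℝ)/4) := by
  have hCσnn : 0 ≤ Cσ := Cσ_nonneg hCσ0
  set f : PathSpace d T → ℝ :=
    fun γ' => (evalPath hT γ' s).1 * σ (⟪(evalPath hT γ' s).2, x⟫) with hf
  have hfc : Continuous f := Gintegrand_continuous hT hσ.continuous s x
  have hfi : ∀ (m : Measure (PathSpace d T)) [IsProbabilityMeasure m],
      Integrable (supN hT) m → Integrable f m := fun m _ hm =>
    Integrable.mono' (G_bound_integrable hT Cσ m hm) hfc.aestronglyMeasurable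
      (Eventually.of_forall fun γ => Gintegrand_bound hT hCσ0 s x γ)
  have hint1 : Integrable (fun γ : PathSpace d T × PathSpace d T => f γ.1) ν :=
    integrable_comp_fst hfc hν1 (hfi m₁ hm₁)
  have hint2 : Integrable (fun γ : PathSpace d T × PathSpace d T => f γ.2) ν :=
    integrable_comp_snd hfc hν2 (hfi m₂ hm₂)
  have hsplit : Gpair hT σ m₁ s x - Gpair hT σ m₂ s x = ∫ γ, (f γ.1 - f γ.2) ∂ν := by
    rw [integral_sub hint1 hint2, integral_comp_fst hfc hν1, integral_comp_snd hfc hν2]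
    rfl
  -- abbreviations
  set dr : ℝ := (d:ℝ) ^ ((1:ℝ)/4) with hdr
  have hdrnn : 0 ≤ dr := Real.rpow_nonneg (Nat.cast_nonneg d) _
  set a : PathSpace d T × PathSpace d T → ℝ := fun γ => |(evalPath hT γ.2 s).1| with ha
  set δ : PathSpace d T × PathSpace d T → ℝ := fun γ => (SFun hT s γ) ^ ((1:ℝ)/4) with hδ
  have ha0 : ∀ γ, 0 ≤ a γ := fun γ => abs_nonneg _
  have hδ0 : ∀ γ, 0 ≤ δ γ := fun γ => Real.rpow_nonneg (SFun_nonneg hT s γ) _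
  have hδc : Continuous δ := (SFun_continuous hT s).rpow_const fun γ => Or.inr (by norm_num)
  have hac : Continuous a :=
    continuous_abs.comp (continuous_fst.comp ((continuous_evalPath_path hT s).comp
      continuous_snd))
  have hδ4 : ∀ γ, (δ γ) ^ (4:ℕ) = SFun hT s γ := fun γ =>
    rpow_quarter_pow (SFun_nonneg hT s γ)
  set g : PathSpace d T × PathSpace d T → ℝ := fun γ => (1 + a γ) * (1 + δ γ) with hg
  have hg0 : ∀ γ, 0 ≤ g γ := fun γ =>
    mul_nonneg (by linarith [ha0 γ]) (by linarith [hδ0 γ])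
  have hgc : Continuous g :=
    ((continuous_const.add hac).mul (continuous_const.add hδc))
  -- pointwise difference bound
  have hΔc : ∀ γ : PathSpace d T × PathSpace d T,
      |(evalPath hT γ.1 s).1 - (evalPath hT γ.2 s).1| ≤ δ γ := by
    intro γ
    apply quarter_le (abs_nonneg _)
    refine le_trans ?_ (lpPow_le_SFun hT hs0 γ)
    rw [lpPow_four_eq]
    exact le_add_of_nonneg_right (Finset.sum_nonneg fun j _ => pow_nonneg (abs_nonneg _) 4)
  have hΔw : ∀ γ : PathSpace d T × PathSpace d T,
      ‖(evalPath hT γ.1 s).2 - (evalPath hT γ.2 s).2‖ ≤ dr * δ γ := by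
    intro γ
    have h1 : ‖(evalPath hT γ.1 s).2 - (evalPath hT γ.2 s).2‖ ^ (4:ℕ)
        ≤ (d:ℝ) * SFun hT s γ := by
      refine (norm_pow_four_le_card_sum _).trans ?_
      refine mul_le_mul_of_nonneg_left ?_ (Nat.cast_nonneg d)
      refine le_trans ?_ (lpPow_le_SFun hT hs0 γ)
      rw [lpPow_four_eq]
      exact le_add_of_nonneg_left (pow_nonneg (abs_nonneg _) 4)
    have h2 := quarter_le (norm_nonneg _) h1
    rwa [Real.mul_rpow (Nat.cast_nonneg d) (SFun_nonneg hT s γ)] at h2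
  have hpt : ∀ γ : PathSpace d T × PathSpace d T,
      |f γ.1 - f γ.2| ≤ (Cσ * (1 + dr) * (1 + ‖x‖)) * (min (δ γ) 1 * g γ) := by
    intro γ
    set c₁ := (evalPath hT γ.1 s).1
    set c₂ := (evalPath hT γ.2 s).1
    set u₁ : ℝ := ⟪(evalPath hT γ.1 s).2, x⟫
    set u₂ : ℝ := ⟪(evalPath hT γ.2 s).2, x⟫
    have e0 : f γ.1 - f γ.2 = (c₁ - c₂) * σ u₁ + c₂ * (σ u₁ - σ u₂) := by
      simp only [hf]; ring
    have e1 : |f γ.1 - f γ.2| ≤ |c₁ - c₂| * |σ u₁| + |c₂| * |σ u₁ - σ u₂| := by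
      rw [e0]
      exact (abs_add_le _ _).trans (by rw [abs_mul, abs_mul])
    have e2 : |σ u₁ - σ u₂| ≤ Cσ * (‖(evalPath hT γ.1 s).2 - (evalPath hT γ.2 s).2‖ * ‖x‖) := by
      refine (sigma_lip hσ hCσ1 u₁ u₂).trans ?_
      refine mul_le_mul_of_nonneg_left ?_ hCσnn
      have : u₁ - u₂ = ⟪(evalPath hT γ.1 s).2 - (evalPath hT γ.2 s).2, x⟫ := by
        rw [inner_sub_left]
      rw [this]
      exact abs_real_inner_le_norm _ _
    have e3 : |f γ.1 - f γ.2| ≤ δ γ * Cσ + a γ * (Cσ * ((dr * δ γ) * ‖x‖)) := by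
      refine e1.trans ?_
      have t1 : |c₁ - c₂| * |σ u₁| ≤ δ γ * Cσ :=
        mul_le_mul (hΔc γ) (hCσ0 u₁) (abs_nonneg _) (hδ0 γ)
      have t2 : |c₂| * |σ u₁ - σ u₂| ≤ a γ * (Cσ * ((dr * δ γ) * ‖x‖)) := by
        refine mul_le_mul le_rfl (e2.trans ?_) (abs_nonneg _) (ha0 γ)
        refine mul_le_mul_of_nonneg_left ?_ hCσnn
        exact mul_le_mul_of_nonneg_right (hΔw γ) (norm_nonneg x)
      linarith
    have e4 : δ γ ≤ min (δ γ) 1 * (1 + δ γ) := by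
      rcases le_total (δ γ) 1 with h | h
      · rw [min_eq_left h]; nlinarith [hδ0 γ]
      · rw [min_eq_right h]; linarith
    have e5 : Cσ + Cσ * (dr * (a γ * ‖x‖))
        ≤ Cσ * (1 + dr) * (1 + ‖x‖) * (1 + a γ) := by
      have h1 := ha0 γ
      have h2 : (0:ℝ) ≤ ‖x‖ := norm_nonneg x
      nlinarith [mul_nonneg hdrnn h1, mul_nonneg h1 h2, mul_nonneg hdrnn (mul_nonneg h1 h2),
        mul_nonneg hCσnn hdrnn]
    have e6 : |f γ.1 - f γ.2| ≤ δ γ * (Cσ + Cσ * (dr * (a γ * ‖x‖))) := by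
      refine e3.trans (le_of_eq ?_); ring
    have hmin0 : 0 ≤ min (δ γ) 1 := le_min (hδ0 γ) zero_le_one
    calc |f γ.1 - f γ.2| ≤ δ γ * (Cσ + Cσ * (dr * (a γ * ‖x‖))) := e6
      _ ≤ (min (δ γ) 1 * (1 + δ γ)) * (Cσ * (1 + dr) * (1 + ‖x‖) * (1 + a γ)) := by
          refine mul_le_mul e4 e5 ?_ ?_
          · positivity
          · have := hδ0 γ; positivity
      _ = (Cσ * (1 + dr) * (1 + ‖x‖)) * (min (δ γ) 1 * g γ) := by
          simp only [hg]; ring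
  -- integrability facts
  have hsup1 : Integrable (fun γ : PathSpace d T × PathSpace d T => supN hT γ.1) ν :=
    integrable_comp_fst (supN_continuous hT) hν1 hm₁
  have hsup2 : Integrable (fun γ : PathSpace d T × PathSpace d T => supN hT γ.2) ν :=
    integrable_comp_snd (supN_continuous hT) hν2 hm₂
  have hi1 : Integrable (fun γ : PathSpace d T × PathSpace d T =>
      (8:ℝ) + 4 * supN hT γ.2) ν := (integrable_const _).add (hsup2.const_mul 4)
  have hi2 : Integrable (fun γ : PathSpace d T × PathSpace d T =>
      32 * (supN hT γ.1 + supN hT γ.2)) ν := (hsup1.add hsup2).const_mul 32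
  set Φ : PathSpace d T × PathSpace d T → ℝ :=
    fun γ => ((8:ℝ) + 4 * supN hT γ.2) + 32 * (supN hT γ.1 + supN hT γ.2) with hΦ
  have hΦint : Integrable Φ ν := hi1.add hi2
  have hgsq : ∀ γ, (g γ) ^ (2:ℕ) ≤ Φ γ := by
    intro γ
    have h1 : (g γ)^(2:ℕ) = ((1 + a γ)^(2:ℕ)) * ((1 + δ γ)^(2:ℕ)) := by
      simp only [hg]; ring
    have h2 : ((1 + a γ)^(2:ℕ)) * ((1 + δ γ)^(2:ℕ))
        ≤ (((1 + a γ)^(4:ℕ)) + ((1 + δ γ)^(4:ℕ)))/2 := by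
      nlinarith [sq_nonneg ((1 + a γ)^(2:ℕ) - (1 + δ γ)^(2:ℕ))]
    have h3 := quad_bound (ha0 γ)
    have h4 := quad_bound (hδ0 γ)
    have h5 : (a γ) ^ (4:ℕ) ≤ supN hT γ.2 := c_pow_le_supN hT γ.2 s
    have h6 : (δ γ) ^ (4:ℕ) ≤ 8 * (supN hT γ.1 + supN hT γ.2) := by
      rw [hδ4 γ]; exact SFun_le hT s γ
    simp only [hΦ]
    linarith
  have hgsqint : Integrable (fun γ => (g γ) ^ (2:ℕ)) ν := by
    refine Integrable.mono' hΦint ((hgc.pow 2).aestronglyMeasurable)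
      (Eventually.of_forall fun γ => ?_)
    rw [Real.norm_eq_abs, abs_of_nonneg (pow_nonneg (hg0 γ) 2)]
    exact hgsq γ
  have hgint : Integrable g ν := by
    refine Integrable.mono' ((integrable_const (1:ℝ)).add hgsqint)
      hgc.aestronglyMeasurable (Eventually.of_forall fun γ => ?_)
    rw [Real.norm_eq_abs, abs_of_nonneg (hg0 γ)]
    exact self_le_one_add_sq (g γ)
  have hminc : Continuous fun γ => min (δ γ) 1 := hδc.min continuous_const
  have hmin0 : ∀ γ, 0 ≤ min (δ γ) 1 := fun γ => le_min (hδ0 γ) zero_le_one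
  have hminsqint : Integrable (fun γ => (min (δ γ) 1) ^ (2:ℕ)) ν := by
    refine Integrable.mono' (integrable_const (1:ℝ))
      ((hminc.pow 2).aestronglyMeasurable) (Eventually.of_forall fun γ => ?_)
    rw [Real.norm_eq_abs, abs_of_nonneg (pow_nonneg (hmin0 γ) 2)]
    calc (min (δ γ) 1)^(2:ℕ) ≤ 1^(2:ℕ) :=
          pow_le_pow_left₀ (hmin0 γ) (min_le_right _ _) 2
      _ = 1 := one_pow 2
  -- Cauchy-Schwarz
  have hCS := myCS hminc.aestronglyMeasurable hgc.aestronglyMeasurable hmin0 hg0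
    hminsqint hgsqint
  -- bound on (∫ (min δ 1)²)^{1/2}
  have hI0 : 0 ≤ ∫ γ, min (SFun hT s γ) 1 ∂ν :=
    integral_nonneg fun γ => le_min (SFun_nonneg hT s γ) zero_le_one
  have hminsq_eq : ∀ γ, (min (δ γ) 1) ^ (2:ℕ) = (min (SFun hT s γ) 1) ^ ((1:ℝ)/2) :=
    fun γ => min_quarter_sq (SFun_nonneg hT s γ)
  have hB1 : ∫ γ, (min (δ γ) 1) ^ (2:ℕ) ∂ν ≤ (∫ γ, min (SFun hT s γ) 1 ∂ν) ^ ((1:ℝ)/2) := by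
    have hrc : Continuous fun γ : PathSpace d T × PathSpace d T =>
        (min (SFun hT s γ) 1) ^ ((1:ℝ)/2) :=
      ((SFun_continuous hT s).min continuous_const).rpow_const fun γ => Or.inr (by norm_num)
    have hr0 : ∀ γ : PathSpace d T × PathSpace d T,
        0 ≤ (min (SFun hT s γ) 1) ^ ((1:ℝ)/2) := fun γ =>
      Real.rpow_nonneg (le_min (SFun_nonneg hT s γ) zero_le_one) _
    have hrsq : ∀ γ : PathSpace d T × PathSpace d T,
        ((min (SFun hT s γ) 1) ^ ((1:ℝ)/2)) ^ (2:ℕ) = min (SFun hT s γ) 1 :=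
      fun γ => rpow_half_sq (le_min (SFun_nonneg hT s γ) zero_le_one)
    have hrsqint : Integrable (fun γ : PathSpace d T × PathSpace d T =>
        ((min (SFun hT s γ) 1) ^ ((1:ℝ)/2)) ^ (2:ℕ)) ν := by
      have := minSFun_integrable hT s ν
      refine this.congr ?_
      exact Eventually.of_forall fun γ => (hrsq γ).symm
    have h2 := myCS hrc.aestronglyMeasurable (aestronglyMeasurable_const (b := (1:ℝ)))
      hr0 (fun _ => zero_le_one) hrsqint (by simpa using integrable_const (1:ℝ))
    simp only [mul_one, one_pow] at h2
    have h3 : ∫ γ, ((min (SFun hT s γ) 1) ^ ((1:ℝ)/2)) ^ (2:ℕ) ∂ν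
        = ∫ γ, min (SFun hT s γ) 1 ∂ν := integral_congr_ae (Eventually.of_forall hrsq)
    have h4 : (∫ (_ : PathSpace d T × PathSpace d T), (1:ℝ) ∂ν) = 1 := by simp
    rw [h3, h4] at h2
    simp only [Real.one_rpow, mul_one] at h2
    calc ∫ γ, (min (δ γ) 1) ^ (2:ℕ) ∂ν
        = ∫ γ, (min (SFun hT s γ) 1) ^ ((1:ℝ)/2) ∂ν :=
          integral_congr_ae (Eventually.of_forall hminsq_eq)
      _ ≤ (∫ γ, min (SFun hT s γ) 1 ∂ν) ^ ((1:ℝ)/2) := h2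
  have hminsq0 : 0 ≤ ∫ γ, (min (δ γ) 1) ^ (2:ℕ) ∂ν :=
    integral_nonneg fun γ => pow_nonneg (hmin0 γ) 2
  have hB1' : (∫ γ, (min (δ γ) 1) ^ (2:ℕ) ∂ν) ^ ((1:ℝ)/2)
      ≤ (∫ γ, min (SFun hT s γ) 1 ∂ν) ^ ((1:ℝ)/4) := by
    rw [← rpow_half_half hI0]
    exact Real.rpow_le_rpow hminsq0 hB1 (by norm_num)
  -- bound on (∫ g²)^{1/2}
  set A₁ : ℝ := ∫ γ, supN hT γ ∂m₁ with hA₁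
  set A₂ : ℝ := ∫ γ, supN hT γ ∂m₂ with hA₂
  have hA₁0 : 0 ≤ A₁ := integral_nonneg (supN_nonneg hT)
  have hA₂0 : 0 ≤ A₂ := integral_nonneg (supN_nonneg hT)
  have hi3 : Integrable (fun γ : PathSpace d T × PathSpace d T =>
      4 * supN hT γ.2) ν := hsup2.const_mul 4
  have hΦval : ∫ γ, Φ γ ∂ν = 8 + 4 * A₂ + 32 * (A₁ + A₂) := by
    simp only [hΦ]
    rw [integral_add hi1 hi2, integral_add (integrable_const (8:ℝ)) hi3,
      integral_const, integral_const_mul, integral_const_mul,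
      integral_add hsup1 hsup2,
      integral_comp_fst (supN_continuous hT) hν1,
      integral_comp_snd (supN_continuous hT) hν2]
    simp [hA₁, hA₂]
  have hB2 : (∫ γ, (g γ) ^ (2:ℕ) ∂ν) ^ ((1:ℝ)/2)
      ≤ (8 + 4 * A₂ + 32 * (A₁ + A₂)) ^ ((1:ℝ)/2) := by
    refine Real.rpow_le_rpow (integral_nonneg fun γ => pow_nonneg (hg0 γ) 2) ?_ (by norm_num)
    calc ∫ γ, (g γ) ^ (2:ℕ) ∂ν ≤ ∫ γ, Φ γ ∂ν :=
          integral_mono hgsqint hΦint hgsq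
      _ = 8 + 4 * A₂ + 32 * (A₁ + A₂) := hΦval
  -- final assembly
  have hintabs : Integrable (fun γ => |f γ.1 - f γ.2|) ν := (hint1.sub hint2).abs
  have hmingint : Integrable (fun γ => min (δ γ) 1 * g γ) ν := by
    refine Integrable.mono' hgint (hminc.mul hgc).aestronglyMeasurable
      (Eventually.of_forall fun γ => ?_)
    rw [Real.norm_eq_abs, abs_of_nonneg (mul_nonneg (hmin0 γ) (hg0 γ))]
    calc min (δ γ) 1 * g γ ≤ 1 * g γ :=
          mul_le_mul_of_nonneg_right (min_le_right _ _) (hg0 γ)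
      _ = g γ := one_mul _
  have step1 : |Gpair hT σ m₁ s x - Gpair hT σ m₂ s x| ≤ ∫ γ, |f γ.1 - f γ.2| ∂ν := by
    rw [hsplit, ← Real.norm_eq_abs]
    refine (norm_integral_le_integral_norm _).trans (le_of_eq ?_)
    exact integral_congr_ae (Eventually.of_forall fun γ => Real.norm_eq_abs _)
  have step2 : ∫ γ, |f γ.1 - f γ.2| ∂ν
      ≤ (Cσ * (1 + dr) * (1 + ‖x‖)) * ∫ γ, min (δ γ) 1 * g γ ∂ν := by
    rw [← integral_const_mul]
    exact integral_mono hintabs (hmingint.const_mul _) hpt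
  have step3 : ∫ γ, min (δ γ) 1 * g γ ∂ν
      ≤ (∫ γ, min (SFun hT s γ) 1 ∂ν) ^ ((1:ℝ)/4)
        * (8 + 4 * A₂ + 32 * (A₁ + A₂)) ^ ((1:ℝ)/2) := by
    refine hCS.trans ?_
    refine mul_le_mul hB1' hB2 (Real.rpow_nonneg
      (integral_nonneg fun γ => pow_nonneg (hg0 γ) 2) _) ?_
    exact Real.rpow_nonneg hI0 _
  have hKnn : 0 ≤ Cσ * (1 + dr) * (1 + ‖x‖) := by positivity
  calc |Gpair hT σ m₁ s x - Gpair hT σ m₂ s x|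
      ≤ ∫ γ, |f γ.1 - f γ.2| ∂ν := step1
    _ ≤ (Cσ * (1 + dr) * (1 + ‖x‖)) * ∫ γ, min (δ γ) 1 * g γ ∂ν := step2
    _ ≤ (Cσ * (1 + dr) * (1 + ‖x‖))
        * ((∫ γ, min (SFun hT s γ) 1 ∂ν) ^ ((1:ℝ)/4)
          * (8 + 4 * A₂ + 32 * (A₁ + A₂)) ^ ((1:ℝ)/2)) :=
        mul_le_mul_of_nonneg_left step3 hKnn
    _ = (Cσ * (1 + dr) * (1 + ‖x‖)) * ((8 + 4 * A₂ + 32 * (A₁ + A₂)) ^ ((1:ℝ)/2))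
        * (∫ γ, min (SFun hT s γ) 1 ∂ν) ^ ((1:ℝ)/4) := by ring

end

end Frozen18
namespace Frozen18

open Set

set_option maxHeartbeats 1000000
set_option synthInstance.maxHeartbeats 400000

noncomputable section

variable {d : ℕ} {T : ℝ}

/-- The constant in the `Gpair`-difference bound. -/
def KK (hT : 0 ≤ T) {σ : ℝ → ℝ} (Cσ : ℝ) (d : ℕ)
    (m₁ m₂ : Measure (PathSpace d T)) : ℝ :=
  Cσ * (1 + (d:ℝ) ^ ((1:ℝ)/4))
    * ((8 + 4 * (∫ γ, supN hT γ ∂m₂)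
        + 32 * ((∫ γ, supN hT γ ∂m₁) + (∫ γ, supN hT γ ∂m₂))) ^ ((1:ℝ)/2)) + 1

lemma KK_pos (hT : 0 ≤ T) {σ : ℝ → ℝ} {Cσ : ℝ} (hCσ0 : ∀ z : ℝ, |σ z| ≤ Cσ)
    (m₁ m₂ : Measure (PathSpace d T)) [IsProbabilityMeasure m₁] [IsProbabilityMeasure m₂] :
    0 < KK (σ := σ) hT Cσ d m₁ m₂ := by
  have h1 : 0 ≤ Cσ := Cσ_nonneg hCσ0
  have h2 : (0:ℝ) ≤ (d:ℝ) ^ ((1:ℝ)/4) := Real.rpow_nonneg (Nat.cast_nonneg d) _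
  have h3 : (0:ℝ) ≤ (8 + 4 * (∫ γ, supN hT γ ∂m₂)
      + 32 * ((∫ γ, supN hT γ ∂m₁) + (∫ γ, supN hT γ ∂m₂))) ^ ((1:ℝ)/2) := by
    apply Real.rpow_nonneg
    have h4 : 0 ≤ ∫ γ, supN hT γ ∂m₁ := integral_nonneg (supN_nonneg hT)
    have h5 : 0 ≤ ∫ γ, supN hT γ ∂m₂ := integral_nonneg (supN_nonneg hT)
    linarith
  have : 0 ≤ Cσ * (1 + (d:ℝ) ^ ((1:ℝ)/4)) * ((8 + 4 * (∫ γ, supN hT γ ∂m₂)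
      + 32 * ((∫ γ, supN hT γ ∂m₁) + (∫ γ, supN hT γ ∂m₂))) ^ ((1:ℝ)/2)) := by positivity
  unfold KK
  linarith

lemma Gdiff_le_Dpath (hT : 0 ≤ T) {σ : ℝ → ℝ} {Cσ : ℝ} (hσ : ContDiff ℝ 2 σ)
    (hCσ0 : ∀ z : ℝ, |σ z| ≤ Cσ) (hCσ1 : ∀ z : ℝ, |deriv σ z| ≤ Cσ)
    (m₁ m₂ : Measure (PathSpace d T)) [IsProbabilityMeasure m₁] [IsProbabilityMeasure m₂]
    (hm₁ : Integrable (supN hT) m₁) (hm₂ : Integrable (supN hT) m₂)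
    {s : ℝ} (hs0 : 0 ≤ s) (x : Euc d) :
    |Gpair hT σ m₁ s x - Gpair hT σ m₂ s x|
      ≤ KK (σ := σ) hT Cσ d m₁ m₂ * (1 + ‖x‖) * Dpath hT s 4 m₁ m₂ := by
  set K := KK (σ := σ) hT Cσ d m₁ m₂ with hK
  have hKpos : 0 < K := KK_pos hT hCσ0 m₁ m₂
  have hxpos : (0:ℝ) < 1 + ‖x‖ := by have := norm_nonneg x; linarith
  have hcpos : 0 < K * (1 + ‖x‖) := mul_pos hKpos hxpos
  have key : ∀ r ∈ DSet hT s m₁ m₂,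
      |Gpair hT σ m₁ s x - Gpair hT σ m₂ s x| / (K * (1 + ‖x‖)) ≤ r := by
    rintro r ⟨ν, hν, h1, h2, rfl⟩
    haveI := hν
    rw [div_le_iff₀ hcpos]
    have hb := coupling_bound hT hσ hCσ0 hCσ1 m₁ m₂ hm₁ hm₂ hs0 x ν h1 h2
    have hr0 : (0:ℝ) ≤ (∫ γ, min (SFun hT s γ) 1 ∂ν) ^ ((1:ℝ)/4) :=
      Real.rpow_nonneg (integral_nonneg fun γ =>
        le_min (SFun_nonneg hT s γ) zero_le_one) _
    refine hb.trans ?_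
    rw [mul_comm ((∫ γ, min (SFun hT s γ) 1 ∂ν) ^ ((1:ℝ)/4)) (K * (1 + ‖x‖))]
    refine mul_le_mul_of_nonneg_right ?_ hr0
    have hKge : Cσ * (1 + (d:ℝ) ^ ((1:ℝ)/4))
        * ((8 + 4 * (∫ γ, supN hT γ ∂m₂)
          + 32 * ((∫ γ, supN hT γ ∂m₁) + (∫ γ, supN hT γ ∂m₂))) ^ ((1:ℝ)/2)) ≤ K := by
      rw [hK]; unfold KK; linarith
    calc Cσ * (1 + (d:ℝ) ^ ((1:ℝ)/4)) * (1 + ‖x‖)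
        * ((8 + 4 * (∫ γ, supN hT γ ∂m₂)
          + 32 * ((∫ γ, supN hT γ ∂m₁) + (∫ γ, supN hT γ ∂m₂))) ^ ((1:ℝ)/2))
        = (Cσ * (1 + (d:ℝ) ^ ((1:ℝ)/4))
          * ((8 + 4 * (∫ γ, supN hT γ ∂m₂)
            + 32 * ((∫ γ, supN hT γ ∂m₁) + (∫ γ, supN hT γ ∂m₂))) ^ ((1:ℝ)/2)))
          * (1 + ‖x‖) := by ring
      _ ≤ K * (1 + ‖x‖) := mul_le_mul_of_nonneg_right hKge (le_of_lt hxpos)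
  have hsinf : |Gpair hT σ m₁ s x - Gpair hT σ m₂ s x| / (K * (1 + ‖x‖))
      ≤ Dpath hT s 4 m₁ m₂ := by
    rw [Dpath_eq_sInf]
    exact le_csInf (DSet_nonempty hT s m₁ m₂) key
  rw [div_le_iff₀ hcpos] at hsinf
  calc |Gpair hT σ m₁ s x - Gpair hT σ m₂ s x|
      ≤ Dpath hT s 4 m₁ m₂ * (K * (1 + ‖x‖)) := hsinf
    _ = K * (1 + ‖x‖) * Dpath hT s 4 m₁ m₂ := by ring

end

end Frozen18
namespace Frozen18

open Set

set_option maxHeartbeats 1000000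
set_option synthInstance.maxHeartbeats 400000

noncomputable section

variable {d : ℕ} {T : ℝ}

lemma arith18 {al Cs A K y x W D : ℝ} (h0 : 0 ≤ al) (h1 : 0 ≤ Cs) (h2 : 0 ≤ A)
    (h3 : 0 ≤ K) (h4 : 0 ≤ y) (h5 : 0 ≤ x) (h6 : 0 ≤ W) (h7 : 0 ≤ D) :
    al * Cs * ((y + Cs * (1 + A)) * (W * x)) + al * Cs * (K * ((1 + x) * D))
      ≤ (al * Cs * (1 + Cs * (1 + A)) * (1 + K)) * ((1 + y) * ((1 + x) * (W + D))) := by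
  have hCA : (0:ℝ) ≤ Cs * (1 + A) := mul_nonneg h1 (by linarith)
  have e1 : (y + Cs * (1 + A)) * (W * x) ≤ ((1 + Cs * (1 + A)) * (1 + y)) * ((1 + x) * (W + D)) := by
    have a1 : y + Cs * (1 + A) ≤ (1 + Cs * (1 + A)) * (1 + y) := by nlinarith [mul_nonneg hCA h4]
    have a2 : W * x ≤ (1 + x) * (W + D) := by nlinarith
    exact mul_le_mul a1 a2 (by positivity) (by positivity)
  have e2 : K * ((1 + x) * D) ≤ K * (((1 + Cs * (1 + A)) * (1 + y)) * ((1 + x) * (W + D))) := by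
    refine mul_le_mul_of_nonneg_left ?_ h3
    calc (1 + x) * D ≤ (1 + x) * (W + D) := by nlinarith
      _ = 1 * ((1 + x) * (W + D)) := (one_mul _).symm
      _ ≤ ((1 + Cs * (1 + A)) * (1 + y)) * ((1 + x) * (W + D)) := by
          refine mul_le_mul_of_nonneg_right ?_ (by positivity)
          nlinarith [mul_nonneg hCA h4]
  have halCs : 0 ≤ al * Cs := mul_nonneg h0 h1
  have f1 := mul_le_mul_of_nonneg_left e1 halCs
  have f2 := mul_le_mul_of_nonneg_left e2 halCs
  nlinarith [f1, f2]

lemma psi_bound {u v : ℝ} (hu : 0 ≤ u) (hv : 0 ≤ v) :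
    (1 + v) * (1 + u) ≤ 4 + (u ^ (4:ℕ) + v ^ (4:ℕ)) := by
  nlinarith [sq_nonneg (u - v), sq_nonneg (1 - u), sq_nonneg (1 - v),
    sq_nonneg (1 - u^2), sq_nonneg (1 - v^2), sq_nonneg u, sq_nonneg v]

lemma Fi_props (hT : 0 ≤ T) {σ : ℝ → ℝ} {Cσ : ℝ} (hσ : ContDiff ℝ 2 σ)
    (hCσ0 : ∀ z : ℝ, |σ z| ≤ Cσ)
    (m : Measure (PathSpace d T)) [IsProbabilityMeasure m] (hm : Integrable (supN hT) m)
    (π : Measure (Euc d × ℝ)) [IsProbabilityMeasure π]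
    (hπmom : Integrable (fun p : Euc d × ℝ => ‖p.1‖ ^ (4:ℕ) + |p.2| ^ (4:ℕ)) π)
    (α : ℝ) (γp : PathSpace d T) :
    (∀ s : ℝ, Integrable (fun pt : Euc d × ℝ =>
        α * (pt.2 - Gpair hT σ m s pt.1) * σ (⟪(evalPath hT γp s).2, pt.1⟫)) π) ∧
    Continuous (fun s : ℝ => ∫ pt, α * (pt.2 - Gpair hT σ m s pt.1)
        * σ (⟪(evalPath hT γp s).2, pt.1⟫) ∂π) := by
  have hCσnn : 0 ≤ Cσ := Cσ_nonneg hCσ0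
  have hA0 : 0 ≤ ∫ γ, supN hT γ ∂m := integral_nonneg (supN_nonneg hT)
  have hyint : Integrable (fun pt : Euc d × ℝ => |pt.2|) π := by
    refine Integrable.mono' ((integrable_const (1:ℝ)).add hπmom)
      (continuous_abs.comp continuous_snd).aestronglyMeasurable
      (Eventually.of_forall fun pt => ?_)
    rw [Real.norm_eq_abs, abs_abs]
    simp only [Pi.add_apply]
    have h1 := abs_le_one_add_pow_four pt.2
    have h2 : (0:ℝ) ≤ ‖pt.1‖ ^ (4:ℕ) := pow_nonneg (norm_nonneg _) 4
    linarith
  have hbint : Integrable (fun pt : Euc d × ℝ =>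
      |α| * ((|pt.2| + Cσ * (1 + ∫ γ, supN hT γ ∂m)) * Cσ)) π := by
    exact (((hyint.add (integrable_const _)).mul_const Cσ).const_mul |α|)
  have hFcont : ∀ s : ℝ, Continuous (fun pt : Euc d × ℝ =>
      α * (pt.2 - Gpair hT σ m s pt.1) * σ (⟪(evalPath hT γp s).2, pt.1⟫)) := by
    intro s
    refine (continuous_const.mul (continuous_snd.sub
      ((Gpair_continuous_x hT hσ.continuous hCσ0 m hm s).comp continuous_fst))).mul
      (hσ.continuous.comp (continuous_const.inner continuous_fst))
  have hFbound : ∀ s : ℝ, ∀ pt : Euc d × ℝ,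
      ‖α * (pt.2 - Gpair hT σ m s pt.1) * σ (⟪(evalPath hT γp s).2, pt.1⟫)‖
        ≤ |α| * ((|pt.2| + Cσ * (1 + ∫ γ, supN hT γ ∂m)) * Cσ) := by
    intro s pt
    rw [Real.norm_eq_abs, abs_mul, abs_mul]
    have h1 : |pt.2 - Gpair hT σ m s pt.1| ≤ |pt.2| + Cσ * (1 + ∫ γ, supN hT γ ∂m) :=
      (abs_sub _ _).trans (by
        have := Gpair_abs_le hT hCσ0 m hm s pt.1
        linarith)
    have h2 := hCσ0 (⟪(evalPath hT γp s).2, pt.1⟫)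
    have h3 : |pt.2 - Gpair hT σ m s pt.1| * |σ (⟪(evalPath hT γp s).2, pt.1⟫)|
        ≤ (|pt.2| + Cσ * (1 + ∫ γ, supN hT γ ∂m)) * Cσ :=
      mul_le_mul h1 h2 (abs_nonneg _) (by positivity)
    rw [mul_assoc]
    exact mul_le_mul_of_nonneg_left h3 (abs_nonneg α)
  constructor
  · intro s
    exact Integrable.mono' hbint (hFcont s).aestronglyMeasurable
      (Eventually.of_forall (hFbound s))
  · apply MeasureTheory.continuous_of_dominated
      (bound := fun pt : Euc d × ℝ => |α| * ((|pt.2| + Cσ * (1 + ∫ γ, supN hT γ ∂m)) * Cσ))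
    · exact fun s => (hFcont s).aestronglyMeasurable
    · exact fun s => Eventually.of_forall (hFbound s)
    · exact hbint
    · refine Eventually.of_forall fun pt => ?_
      refine (continuous_const.mul (continuous_const.sub
        (Gpair_continuous_s hT hσ.continuous hCσ0 m hm pt.1))).mul
        (hσ.continuous.comp ?_)
      exact ((continuous_snd.comp (continuous_evalPath_time hT γp)).inner continuous_const)

end

end Frozen18
open Frozen18 in
/-- pathwise Gronwall-type bound for the `c`-difference of solutions
of the frozen system with inputs `m¹, m²` and the same initial condition:
`|c_t² − c_t¹| ≤ C ∫₀ᵗ [ ‖w_s²−w_s¹‖ + D_{s,4}(m¹,m²) ]`. -/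
theorem frozen_system_c_difference_bound
    (d : ℕ) (α T : ℝ) (hα : 0 < α) (hT : 0 < T)
    (σ : ℝ → ℝ) (hσ : ContDiff ℝ 2 σ)
    (Cσ : ℝ) (hCσ : ∀ z : ℝ, |σ z| ≤ Cσ ∧ |deriv σ z| ≤ Cσ ∧ |deriv (deriv σ) z| ≤ Cσ)
    (π : Measure (Euc d × ℝ)) [IsProbabilityMeasure π]
    (hπmom : Integrable (fun p : Euc d × ℝ => ‖p.1‖ ^ 4 + |p.2| ^ 4) π)
    (μ0 : Measure (ℝ × Euc d)) [IsProbabilityMeasure μ0]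
    (q C0 : ℝ) (hq : 0 < q)
    (hμ0c : ∫ z, Real.exp (q * |z.1|) ∂μ0 ≤ C0)
    (hμ0w : ∫ z, ‖z.2‖ ^ 4 ∂μ0 ≤ C0)
    {Ω : Type} [MeasureSpace Ω] [IsProbabilityMeasure (ℙ : Measure Ω)]
    (m₁ m₂ : Measure (PathSpace d T)) [IsProbabilityMeasure m₁] [IsProbabilityMeasure m₂]
    (hm₁ : Integrable (fun γ => ⨆ t : Set.Icc (0:ℝ) T,
      (|(evalPath hT.le γ (t : ℝ)).1| ^ 4 + ‖(evalPath hT.le γ (t : ℝ)).2‖ ^ 4)) m₁)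
    (hm₂ : Integrable (fun γ => ⨆ t : Set.Icc (0:ℝ) T,
      (|(evalPath hT.le γ (t : ℝ)).1| ^ 4 + ‖(evalPath hT.le γ (t : ℝ)).2‖ ^ 4)) m₂)
    (ξ₁ ξ₂ : Ω → PathSpace d T)
    (hξ₁ : IsFrozenSolution hT.le α σ π μ0 m₁ ξ₁)
    (hξ₂ : IsFrozenSolution hT.le α σ π μ0 m₂ ξ₂)
    (hsame0 : ∀ ω, evalPath hT.le (ξ₁ ω) 0 = evalPath hT.le (ξ₂ ω) 0) :
    ∃ C : ℝ, ∀ t ∈ Set.Icc (0:ℝ) T, ∀ᵐ ω ∂ℙ,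
      |(evalPath hT.le (ξ₂ ω) t).1 - (evalPath hT.le (ξ₁ ω) t).1|
        ≤ C * ∫ s in (0:ℝ)..t,
          (‖(evalPath hT.le (ξ₂ ω) s).2 - (evalPath hT.le (ξ₁ ω) s).2‖
            + Dpath hT.le s 4 m₁ m₂) := by
  classical
  obtain ⟨hmeas₁, hinit₁, hid₁⟩ := hξ₁
  obtain ⟨hmeas₂, hinit₂, hid₂⟩ := hξ₂
  have hCσ0 : ∀ z : ℝ, |σ z| ≤ Cσ := fun z => (hCσ z).1
  have hCσ1 : ∀ z : ℝ, |deriv σ z| ≤ Cσ := fun z => (hCσ z).2.1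
  have hCσnn : 0 ≤ Cσ := Cσ_nonneg hCσ0
  have hm₁' : Integrable (supN hT.le) m₁ := hm₁
  have hm₂' : Integrable (supN hT.le) m₂ := hm₂
  set A₂ : ℝ := ∫ γ, supN hT.le γ ∂m₂ with hA₂def
  have hA₂0 : 0 ≤ A₂ := integral_nonneg (supN_nonneg hT.le)
  set K : ℝ := KK (σ := σ) hT.le Cσ d m₁ m₂ with hKdef
  have hK0 : 0 < K := KK_pos hT.le hCσ0 m₁ m₂
  have hπmom' : Integrable (fun p : Euc d × ℝ => ‖p.1‖ ^ (4:ℕ) + |p.2| ^ (4:ℕ)) π := hπmom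
  set P : ℝ := ∫ pt, (‖pt.1‖ ^ (4:ℕ) + |pt.2| ^ (4:ℕ)) ∂π with hPdef
  have hP0 : 0 ≤ P := by
    rw [hPdef]
    exact integral_nonneg fun pt => by positivity
  set C₁ : ℝ := α * Cσ * (1 + Cσ * (1 + A₂)) * (1 + K) with hC₁def
  have hC₁0 : 0 ≤ C₁ := by
    rw [hC₁def]
    have h1 : (0:ℝ) ≤ 1 + Cσ * (1 + A₂) := by positivity
    have h2 : (0:ℝ) ≤ 1 + K := by linarith
    have := mul_nonneg (mul_nonneg (mul_nonneg hα.le hCσnn) h1) h2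
    linarith
  refine ⟨C₁ * (4 + P), ?_⟩
  intro t ht
  refine Filter.Eventually.of_forall fun ω => ?_
  -- Ψ integrability
  have hΨc : Continuous fun pt : Euc d × ℝ => (1 + |pt.2|) * (1 + ‖pt.1‖) :=
    (continuous_const.add (continuous_abs.comp continuous_snd)).mul
      (continuous_const.add (continuous_norm.comp continuous_fst))
  have hΨint : Integrable (fun pt : Euc d × ℝ => (1 + |pt.2|) * (1 + ‖pt.1‖)) π := by
    refine Integrable.mono' ((integrable_const (4:ℝ)).add hπmom')
      hΨc.aestronglyMeasurable (Filter.Eventually.of_forall fun pt => ?_)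
    simp only [Pi.add_apply]
    rw [Real.norm_eq_abs, abs_of_nonneg (by positivity)]
    exact psi_bound (norm_nonneg pt.1) (abs_nonneg pt.2)
  have hΨle : ∫ pt, (1 + |pt.2|) * (1 + ‖pt.1‖) ∂π ≤ 4 + P := by
    have h1 : ∫ pt, (1 + |pt.2|) * (1 + ‖pt.1‖) ∂π
        ≤ ∫ pt, ((4:ℝ) + (‖pt.1‖ ^ (4:ℕ) + |pt.2| ^ (4:ℕ))) ∂π := by
      refine integral_mono hΨint ((integrable_const (4:ℝ)).add hπmom') fun pt => ?_
      exact psi_bound (norm_nonneg pt.1) (abs_nonneg pt.2)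
    rw [integral_add (integrable_const _) hπmom', integral_const] at h1
    simp only [measure_univ, probReal_univ, ENNReal.toReal_one, smul_eq_mul, one_mul] at h1
    rw [hPdef]
    linarith
  -- F props
  have hF₁ := Fi_props hT.le hσ hCσ0 m₁ hm₁' π hπmom' α (ξ₁ ω)
  have hF₂ := Fi_props hT.le hσ hCσ0 m₂ hm₂' π hπmom' α (ξ₂ ω)
  set g₁ : ℝ → ℝ := fun s => ∫ pt, α * (pt.2 - Gpair hT.le σ m₁ s pt.1)
      * σ (⟪(evalPath hT.le (ξ₁ ω) s).2, pt.1⟫) ∂π with hg₁def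
  set g₂ : ℝ → ℝ := fun s => ∫ pt, α * (pt.2 - Gpair hT.le σ m₂ s pt.1)
      * σ (⟪(evalPath hT.le (ξ₂ ω) s).2, pt.1⟫) ∂π with hg₂def
  have hi₁ : IntervalIntegrable g₁ MeasureTheory.volume 0 t := hF₁.2.intervalIntegrable 0 t
  have hi₂ : IntervalIntegrable g₂ MeasureTheory.volume 0 t := hF₂.2.intervalIntegrable 0 t
  have hdiffc : (evalPath hT.le (ξ₂ ω) t).1 - (evalPath hT.le (ξ₁ ω) t).1
      = ∫ s in (0:ℝ)..t, (g₂ s - g₁ s) := by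
    rw [intervalIntegral.integral_sub hi₂ hi₁]
    have e₁ := (hid₁ ω t ht).1
    have e₂ := (hid₂ ω t ht).1
    have e0 : (evalPath hT.le (ξ₁ ω) 0).1 = (evalPath hT.le (ξ₂ ω) 0).1 := by rw [hsame0 ω]
    rw [e₁, e₂, e0, ← hg₁def, ← hg₂def]
    ring
  -- pointwise bound in s
  have hsb : ∀ s : ℝ, 0 ≤ s → s ≤ T →
      |g₂ s - g₁ s| ≤ C₁ * (4 + P)
        * (‖(evalPath hT.le (ξ₂ ω) s).2 - (evalPath hT.le (ξ₁ ω) s).2‖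
          + Dpath hT.le s 4 m₁ m₂) := by
    intro s hs0 hsT
    set W : ℝ := ‖(evalPath hT.le (ξ₂ ω) s).2 - (evalPath hT.le (ξ₁ ω) s).2‖ with hWdef
    set D : ℝ := Dpath hT.le s 4 m₁ m₂ with hDdef
    have hW0 : 0 ≤ W := norm_nonneg _
    have hD0 : 0 ≤ D := Dpath_nonneg hT.le s m₁ m₂
    have hsub : g₂ s - g₁ s = ∫ pt,
        (α * (pt.2 - Gpair hT.le σ m₂ s pt.1) * σ (⟪(evalPath hT.le (ξ₂ ω) s).2, pt.1⟫)
          - α * (pt.2 - Gpair hT.le σ m₁ s pt.1) * σ (⟪(evalPath hT.le (ξ₁ ω) s).2, pt.1⟫)) ∂π :=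
      (integral_sub (hF₂.1 s) (hF₁.1 s)).symm
    have hptw : ∀ pt : Euc d × ℝ,
        |α * (pt.2 - Gpair hT.le σ m₂ s pt.1) * σ (⟪(evalPath hT.le (ξ₂ ω) s).2, pt.1⟫)
          - α * (pt.2 - Gpair hT.le σ m₁ s pt.1) * σ (⟪(evalPath hT.le (ξ₁ ω) s).2, pt.1⟫)|
        ≤ (C₁ * (W + D)) * ((1 + |pt.2|) * (1 + ‖pt.1‖)) := by
      intro pt
      have b1 : |pt.2 - Gpair hT.le σ m₂ s pt.1| ≤ |pt.2| + Cσ * (1 + A₂) := by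
        refine (abs_sub _ _).trans ?_
        have h := Gpair_abs_le hT.le hCσ0 m₂ hm₂' s pt.1
        rw [hA₂def]
        linarith
      have b2 : |σ (⟪(evalPath hT.le (ξ₂ ω) s).2, pt.1⟫)
          - σ (⟪(evalPath hT.le (ξ₁ ω) s).2, pt.1⟫)| ≤ Cσ * (W * ‖pt.1‖) := by
        refine (sigma_lip hσ hCσ1 _ _).trans ?_
        refine mul_le_mul_of_nonneg_left ?_ hCσnn
        have hin : (⟪(evalPath hT.le (ξ₂ ω) s).2, pt.1⟫ : ℝ)
            - ⟪(evalPath hT.le (ξ₁ ω) s).2, pt.1⟫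
            = ⟪(evalPath hT.le (ξ₂ ω) s).2 - (evalPath hT.le (ξ₁ ω) s).2, pt.1⟫ :=
          (inner_sub_left _ _ _).symm
        rw [hin, hWdef]
        exact abs_real_inner_le_norm _ _
      have b3 : |Gpair hT.le σ m₁ s pt.1 - Gpair hT.le σ m₂ s pt.1|
          ≤ K * (1 + ‖pt.1‖) * D := by
        rw [hKdef, hDdef]
        exact Gdiff_le_Dpath hT.le hσ hCσ0 hCσ1 m₁ m₂ hm₁' hm₂' hs0 pt.1
      have hKD0 : (0:ℝ) ≤ K * (1 + ‖pt.1‖) * D := by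
        have h1 : (0:ℝ) ≤ 1 + ‖pt.1‖ := by positivity
        exact mul_nonneg (mul_nonneg hK0.le h1) hD0
      have hb1nn : (0:ℝ) ≤ |pt.2| + Cσ * (1 + A₂) :=
        add_nonneg (abs_nonneg _) (mul_nonneg hCσnn (by linarith))
      calc |α * (pt.2 - Gpair hT.le σ m₂ s pt.1) * σ (⟪(evalPath hT.le (ξ₂ ω) s).2, pt.1⟫)
          - α * (pt.2 - Gpair hT.le σ m₁ s pt.1) * σ (⟪(evalPath hT.le (ξ₁ ω) s).2, pt.1⟫)|
          = |α * ((pt.2 - Gpair hT.le σ m₂ s pt.1)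
              * (σ (⟪(evalPath hT.le (ξ₂ ω) s).2, pt.1⟫)
                - σ (⟪(evalPath hT.le (ξ₁ ω) s).2, pt.1⟫)))
            + α * ((Gpair hT.le σ m₁ s pt.1 - Gpair hT.le σ m₂ s pt.1)
              * σ (⟪(evalPath hT.le (ξ₁ ω) s).2, pt.1⟫))| := by ring_nf
        _ ≤ |α * ((pt.2 - Gpair hT.le σ m₂ s pt.1)
              * (σ (⟪(evalPath hT.le (ξ₂ ω) s).2, pt.1⟫)
                - σ (⟪(evalPath hT.le (ξ₁ ω) s).2, pt.1⟫)))|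
            + |α * ((Gpair hT.le σ m₁ s pt.1 - Gpair hT.le σ m₂ s pt.1)
              * σ (⟪(evalPath hT.le (ξ₁ ω) s).2, pt.1⟫))| := abs_add_le _ _
        _ = |α| * (|pt.2 - Gpair hT.le σ m₂ s pt.1|
              * |σ (⟪(evalPath hT.le (ξ₂ ω) s).2, pt.1⟫)
                - σ (⟪(evalPath hT.le (ξ₁ ω) s).2, pt.1⟫)|)
            + |α| * (|Gpair hT.le σ m₁ s pt.1 - Gpair hT.le σ m₂ s pt.1|
              * |σ (⟪(evalPath hT.le (ξ₁ ω) s).2, pt.1⟫)|) := by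
            rw [abs_mul, abs_mul, abs_mul, abs_mul]
        _ ≤ |α| * ((|pt.2| + Cσ * (1 + A₂)) * (Cσ * (W * ‖pt.1‖)))
            + |α| * ((K * (1 + ‖pt.1‖) * D) * Cσ) := by
            have q1 := mul_le_mul b1 b2 (abs_nonneg _) hb1nn
            have q2 := mul_le_mul b3 (hCσ0 (⟪(evalPath hT.le (ξ₁ ω) s).2, pt.1⟫)) (abs_nonneg _) hKD0
            have r1 := mul_le_mul_of_nonneg_left q1 (abs_nonneg α)
            have r2 := mul_le_mul_of_nonneg_left q2 (abs_nonneg α)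
            linarith
        _ = α * Cσ * ((|pt.2| + Cσ * (1 + A₂)) * (W * ‖pt.1‖))
            + α * Cσ * (K * ((1 + ‖pt.1‖) * D)) := by
            rw [abs_of_pos hα]; ring
        _ ≤ (α * Cσ * (1 + Cσ * (1 + A₂)) * (1 + K))
            * ((1 + |pt.2|) * ((1 + ‖pt.1‖) * (W + D))) :=
            arith18 hα.le hCσnn hA₂0 hK0.le (abs_nonneg _) (norm_nonneg _) hW0 hD0
        _ = (C₁ * (W + D)) * ((1 + |pt.2|) * (1 + ‖pt.1‖)) := by
            rw [hC₁def]; ring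
    have hnorm : |g₂ s - g₁ s| ≤ (C₁ * (W + D)) * ∫ pt, (1 + |pt.2|) * (1 + ‖pt.1‖) ∂π := by
      rw [hsub, ← Real.norm_eq_abs, ← integral_const_mul]
      refine MeasureTheory.norm_integral_le_of_norm_le (hΨint.const_mul _)
        (Filter.Eventually.of_forall fun pt => ?_)
      rw [Real.norm_eq_abs]
      exact hptw pt
    have hCWD0 : 0 ≤ C₁ * (W + D) := mul_nonneg hC₁0 (by linarith)
    calc |g₂ s - g₁ s| ≤ (C₁ * (W + D)) * ∫ pt, (1 + |pt.2|) * (1 + ‖pt.1‖) ∂π := hnorm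
      _ ≤ (C₁ * (W + D)) * (4 + P) := mul_le_mul_of_nonneg_left hΨle hCWD0
      _ = C₁ * (4 + P) * (W + D) := by ring
  -- interval integrability of the bound
  have hWc : Continuous fun s : ℝ =>
      ‖(evalPath hT.le (ξ₂ ω) s).2 - (evalPath hT.le (ξ₁ ω) s).2‖ :=
    (((continuous_snd.comp (continuous_evalPath_time hT.le (ξ₂ ω))).sub
      (continuous_snd.comp (continuous_evalPath_time hT.le (ξ₁ ω)))).norm)
  have hDmono : Monotone fun s : ℝ => Dpath hT.le s 4 m₁ m₂ :=
    fun a b hab => Dpath_mono hT.le hab m₁ m₂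
  have hsumint : IntervalIntegrable (fun s : ℝ =>
      ‖(evalPath hT.le (ξ₂ ω) s).2 - (evalPath hT.le (ξ₁ ω) s).2‖
        + Dpath hT.le s 4 m₁ m₂) MeasureTheory.volume 0 t :=
    (hWc.intervalIntegrable 0 t).add hDmono.intervalIntegrable
  have hbint : IntervalIntegrable (fun s : ℝ => C₁ * (4 + P)
      * (‖(evalPath hT.le (ξ₂ ω) s).2 - (evalPath hT.le (ξ₁ ω) s).2‖
        + Dpath hT.le s 4 m₁ m₂)) MeasureTheory.volume 0 t := by
    have := hsumint.const_mul (C₁ * (4 + P))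
    simpa [mul_assoc] using this
  have habs : |∫ s in (0:ℝ)..t, (g₂ s - g₁ s)|
      ≤ |∫ s in (0:ℝ)..t, C₁ * (4 + P)
        * (‖(evalPath hT.le (ξ₂ ω) s).2 - (evalPath hT.le (ξ₁ ω) s).2‖
          + Dpath hT.le s 4 m₁ m₂)| := by
    rw [← Real.norm_eq_abs]
    refine intervalIntegral.norm_integral_le_abs_of_norm_le ?_ hbint
    refine (MeasureTheory.ae_restrict_iff' measurableSet_uIoc).mpr
      (Filter.Eventually.of_forall fun s hs => ?_)
    rw [Set.uIoc_of_le ht.1] at hs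
    rw [Real.norm_eq_abs]
    exact hsb s hs.1.le (hs.2.trans ht.2)
  have hIpos : 0 ≤ ∫ s in (0:ℝ)..t,
      (‖(evalPath hT.le (ξ₂ ω) s).2 - (evalPath hT.le (ξ₁ ω) s).2‖
        + Dpath hT.le s 4 m₁ m₂) :=
    intervalIntegral.integral_nonneg ht.1 fun u _ =>
      add_nonneg (norm_nonneg _) (Dpath_nonneg hT.le u m₁ m₂)
  calc |(evalPath hT.le (ξ₂ ω) t).1 - (evalPath hT.le (ξ₁ ω) t).1|
      = |∫ s in (0:ℝ)..t, (g₂ s - g₁ s)| := by rw [hdiffc]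
    _ ≤ |∫ s in (0:ℝ)..t, C₁ * (4 + P)
        * (‖(evalPath hT.le (ξ₂ ω) s).2 - (evalPath hT.le (ξ₁ ω) s).2‖
          + Dpath hT.le s 4 m₁ m₂)| := habs
    _ = |C₁ * (4 + P) * ∫ s in (0:ℝ)..t,
        (‖(evalPath hT.le (ξ₂ ω) s).2 - (evalPath hT.le (ξ₁ ω) s).2‖
          + Dpath hT.le s 4 m₁ m₂)| := by
        rw [intervalIntegral.integral_const_mul]
    _ = C₁ * (4 + P) * ∫ s in (0:ℝ)..t,
        (‖(evalPath hT.le (ξ₂ ω) s).2 - (evalPath hT.le (ξ₁ ω) s).2‖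
          + Dpath hT.le s 4 m₁ m₂) := by
        rw [abs_of_nonneg (mul_nonneg (mul_nonneg hC₁0 (by linarith)) hIpos)]
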